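/- Let S be a Hausdorff topological semigroup containing a subsemigroup B isomorphic to the bicyclic monoid C(p,q), with B discrete in the subspace topology. If the square S × S is countably compact, then a contradiction arises; hence no such B exists. Specifically: any accumulation point (a,b) of the sequence ((q^n, p^n))_{n≥1} in S × S satisfies a·b = 1, and this leads to an element p^{m-n} ∈ O(a)·O(b) ∩ B = {1} with m > n, a contradiction. -/

import Mathlib

/-- The multiplication of the bicyclic monoid `C(p,q)` (generated by `p`, `q`
with `q * p = 1`), in the normal form `(a, b) ↔ p^a * q^b`. -/
def bicyclicMul (u v : ℕ × ℕ) : ℕ × ℕ :=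
  (u.1 + v.1 - min u.2 v.1, u.2 + v.2 - min u.2 v.1)

/-- Let `S` be a Hausdorff topological semigroup containing a subsemigroup
`B = range φ` isomorphic to the bicyclic monoid `C(p,q)` (via the injective
homomorphism `φ`), with `B` discrete in the subspace topology.  If the square
`S × S` is countably compact, then a contradiction arises; hence no such `B`
exists. -/
theorem bicyclic_discrete_contradiction {S : Type*} [Semigroup S]
    [TopologicalSpace S] [T2Space S] [ContinuousMul S]
    (φ : ℕ × ℕ → S) (hinj : Function.Injective φ)
    (hhom : ∀ u v : ℕ × ℕ, φ (bicyclicMul u v) = φ u * φ v)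
    (hdisc : DiscreteTopology (Set.range φ))
    (hcc : ∀ u : ℕ → S × S, ∃ a : S × S, MapClusterPt a Filter.atTop u) :
    False := by
  classical
  set e : S := φ (0, 0) with he_def
  obtain ⟨⟨a, b⟩, hab⟩ := hcc (fun n => (φ (0, n), φ (n, 0)))
  -- the products q^n * p^n are all equal to the identity e
  have hconst : ∀ n : ℕ, φ (0, n) * φ (n, 0) = e := by
    intro n
    rw [← hhom]
    congr 1
    simp [bicyclicMul]
  -- a * b is a cluster point of the constant sequence e, hence a * b = e
  have hmc : MapClusterPt (a * b) Filter.atTop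
      (fun n => φ (0, n) * φ (n, 0)) := by
    have := hab.continuousAt_comp (f := fun p : S × S => p.1 * p.2)
      continuous_mul.continuousAt
    simpa [Function.comp_def] using this
  have habe : a * b = e := by
    have h1 : MapClusterPt (a * b) Filter.atTop (fun _ : ℕ => e) := by
      simpa [hconst] using hmc
    have h2 : ClusterPt (a * b) (pure e) := by
      simpa [MapClusterPt, Filter.map_const] using h1
    have h3 : a * b ∈ closure {e} := by
      rw [mem_closure_iff_clusterPt, Filter.principal_singleton]
      exact h2
    simpa using h3
  -- discreteness of the range gives an isolating open set around e
  have he : e ∈ Set.range φ := ⟨(0, 0), rfl⟩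
  obtain ⟨U, hUopen, hU⟩ := isOpen_induced_iff.mp
    (isOpen_discrete ({⟨e, he⟩} : Set (Set.range φ)))
  have heU : e ∈ U := by
    have : (⟨e, he⟩ : Set.range φ) ∈ Subtype.val ⁻¹' U := by rw [hU]; rfl
    exact this
  have hUe : ∀ x : ℕ × ℕ, φ x ∈ U → φ x = e := by
    intro x hx
    have hmem : (⟨φ x, ⟨x, rfl⟩⟩ : Set.range φ) ∈ Subtype.val ⁻¹' U := hx
    rw [hU] at hmem
    exact congrArg Subtype.val hmem
  -- continuity of multiplication at (a, b)
  have hU_nhds : U ∈ nhds (a * b) := hUopen.mem_nhds (habe ▸ heU)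
  have hpre : (fun p : S × S => p.1 * p.2) ⁻¹' U ∈ nhds (a, b) :=
    (continuous_mul.continuousAt (x := (a, b))) hU_nhds
  obtain ⟨V, hV, W, hW, hVW⟩ := mem_nhds_prod_iff.mp hpre
  -- the sequence lands in V ×ˢ W frequently
  have hfreq : ∃ᶠ n in Filter.atTop, (φ (0, n), φ (n, 0)) ∈ V ×ˢ W := by
    have := mapClusterPt_iff_frequently.mp hab (V ×ˢ W) (prod_mem_nhds hV hW)
    exact this
  obtain ⟨n, -, hn⟩ := Filter.frequently_atTop.mp hfreq 0
  obtain ⟨m, hm, hmmem⟩ := Filter.frequently_atTop.mp hfreq (n + 1)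
  -- form the mixed product q^n * p^m = p^(m-n)
  have hx : φ (0, n) * φ (m, 0) ∈ U := hVW (Set.mk_mem_prod hn.1 hmmem.2)
  have hx' : φ (0, n) * φ (m, 0) = φ (m - n, 0) := by
    rw [← hhom]
    congr 1
    simp only [bicyclicMul, Prod.mk.injEq]
    constructor <;> omega
  have hfin : φ (m - n, 0) = φ (0, 0) := hUe _ (hx' ▸ hx)
  have := hinj hfin
  simp only [Prod.mk.injEq] at this
  omega
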